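/- Let A be a finite type of assignments, η0 a design on A, and Δ : A → ℝ (the covariate imbalance, which, when all potential outcomes equal the covariates, equals the difference-in-means estimator with true effect τ = 0). For each z ∈ A, let S(z) = {z' ∈ A : |Δ(z')| < |Δ(z)|} be the set of assignments with strictly better balance. Suppose that for every z in the support of η0: S(z) is nonempty, and the oracle interval endpoints satisfy min_{z'∈S(z)} Δ(z') ≤ L(z) ≤ U(z) ≤ max_{z'∈S(z)} Δ(z'). Then P_{η0}({z : Δ(z) − U(z) ≤ 0 and 0 ≤ Δ(z) − L(z)}) = 0; i.e., the as-if rerandomized procedure that conditions on balance strictly better than the observed balance has coverage zero. (Paper's appendix result on zero coverage for the strict rerandomized as-if design.) -/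
import Mathlib

open scoped Classical

/-- Zero coverage of the strict rerandomized as-if design: if for every
assignment `z` in the support of `η0` the oracle interval endpoints `L z ≤ U z`
lie between the minimum and maximum of the imbalance values over
`S(z) = {z' : |Δ z'| < |Δ z|}` (with `S(z)` nonempty), then the procedure
covers `τ = 0` with probability zero. -/
theorem strict_rerandomization_zero_coverage {A : Type*} [Fintype A]
    (η0 : A → ℝ) (hη0 : ∀ z, 0 ≤ η0 z) (hsum : ∑ z, η0 z = 1)
    (Δ : A → ℝ) (L U : A → ℝ)
    (hLU : ∀ z, 0 < η0 z → L z ≤ U z)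
    (hmin : ∀ z, 0 < η0 z → ∃ z', |Δ z'| < |Δ z| ∧ Δ z' ≤ L z)
    (hmax : ∀ z, 0 < η0 z → ∃ z', |Δ z'| < |Δ z| ∧ U z ≤ Δ z') :
    (∑ z, if Δ z - U z ≤ 0 ∧ 0 ≤ Δ z - L z then η0 z else 0) = 0 := by
  apply Finset.sum_eq_zero
  intro z _
  split_ifs with h
  · by_contra hne
    have hpos : 0 < η0 z := lt_of_le_of_ne (hη0 z) (Ne.symm hne)
    obtain ⟨z1, hz1, hz1L⟩ := hmin z hpos
    obtain ⟨z2, hz2, hz2U⟩ := hmax z hpos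
    have h1 : Δ z1 ≤ Δ z := le_trans hz1L (by linarith [h.2])
    have h2 : Δ z ≤ Δ z2 := le_trans (by linarith [h.1]) hz2U
    rcases le_or_gt 0 (Δ z) with hs | hs
    · have : |Δ z| ≤ |Δ z2| := by
        rw [abs_of_nonneg hs, abs_of_nonneg (le_trans hs h2)]; exact h2
      linarith [hz2]
    · have : |Δ z| ≤ |Δ z1| := by
        rw [abs_of_neg hs, abs_of_neg (lt_of_le_of_lt h1 hs)]; linarith
      linarith [hz1]
  · rfl
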